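/- The bilinear form φ^{(2)} on 𝔡_t^{(n)} defined by φ^{(2)}(M1 ⊗ D^{k1}Z^{l1}, M2 ⊗ D^{k2}Z^{l2}) = k1 · t^{k1·l1} · δ_{k1,-k2} · δ_{l1,-l2} · tr(M1·M2) is a Lie algebra 2-cocycle on 𝔡_t^{(n)} with values in ℂ. -/

import Mathlib

/-- The matrix quantum torus `𝔡_t^{(n)} = M_n(ℂ) ⊗ 𝔡_t`, realized as finitely supported
families of matrices indexed by `(k,l) ∈ ℤ²`, where `(k,l)` records `D^k Z^l`. -/
abbrev DT (n : ℕ) := (ℤ × ℤ) →₀ Matrix (Fin n) (Fin n) ℂ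

/-- The associative product of `𝔡_t^{(n)}`: since `DZ = t·ZD`, one has
`(M1 ⊗ D^{k1}Z^{l1})(M2 ⊗ D^{k2}Z^{l2}) = t^{-l1·k2} M1M2 ⊗ D^{k1+k2}Z^{l1+l2}`. -/
noncomputable def dmul (n : ℕ) (t : ℂ) (X Y : DT n) : DT n :=
  X.sum fun p A => Y.sum fun q B =>
    Finsupp.single (p.1 + q.1, p.2 + q.2) (t ^ (-(p.2 * q.1)) • (A * B))

/-- The commutator Lie bracket on `𝔡_t^{(n)}`. -/
noncomputable def dbr (n : ℕ) (t : ℂ) (X Y : DT n) : DT n :=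
  dmul n t X Y - dmul n t Y X

/-- The bilinear form `φ^{(2)}`, given on basis elements by
`φ^{(2)}(M1 ⊗ D^{k1}Z^{l1}, M2 ⊗ D^{k2}Z^{l2}) = k1·t^{k1·l1}·δ_{k1,-k2}·δ_{l1,-l2}·tr(M1M2)`. -/
noncomputable def phi2 (n : ℕ) (t : ℂ) (X Y : DT n) : ℂ :=
  X.sum fun p A => (p.1 : ℂ) * t ^ (p.1 * p.2) * (A * Y (-p.1, -p.2)).trace

variable {n : ℕ} {t : ℂ}

lemma phi2_zero_left (Y : DT n) : phi2 n t 0 Y = 0 := by simp [phi2]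

lemma phi2_zero_right (X : DT n) : phi2 n t X 0 = 0 := by
  unfold phi2
  rw [show (fun (p : ℤ×ℤ) (A : Matrix (Fin n) (Fin n) ℂ) => (p.1 : ℂ) * t ^ (p.1 * p.2) * (A * (0 : DT n) (-p.1, -p.2)).trace) = fun _ _ => 0 from funext fun p => funext fun A => by simp, Finsupp.sum, Finset.sum_const_zero]

lemma phi2_add_left (X X' Y : DT n) :
    phi2 n t (X + X') Y = phi2 n t X Y + phi2 n t X' Y := by
  unfold phi2
  apply Finsupp.sum_add_index' <;> intros <;> simp [Matrix.add_mul, mul_add]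

lemma phi2_add_right (X Y Y' : DT n) :
    phi2 n t X (Y + Y') = phi2 n t X Y + phi2 n t X Y' := by
  unfold phi2
  rw [← Finsupp.sum_add]
  exact Finsupp.sum_congr fun p _ => by simp [Matrix.mul_add, mul_add]

lemma phi2_sub_left (X X' Y : DT n) :
    phi2 n t (X - X') Y = phi2 n t X Y - phi2 n t X' Y :=
  map_sub (AddMonoidHom.mk' (fun X => phi2 n t X Y) (fun a b => phi2_add_left a b Y)) X X'

lemma dmul_zero_left (Y : DT n) : dmul n t 0 Y = 0 := by simp [dmul]

lemma dmul_zero_right (X : DT n) : dmul n t X 0 = 0 := by simp [dmul]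

lemma dmul_add_left (X X' Y : DT n) :
    dmul n t (X + X') Y = dmul n t X Y + dmul n t X' Y := by
  unfold dmul
  apply Finsupp.sum_add_index'
  · intro p
    exact (Finsupp.sum_congr (fun q _ => by simp) : _ = Y.sum fun _ _ => (0 : DT n)) |>.trans Finset.sum_const_zero
  · intro p A A'
    rw [← Finsupp.sum_add]
    exact Finsupp.sum_congr fun q _ => by simp [Matrix.add_mul, smul_add, Finsupp.single_add]

lemma dmul_add_right (X Y Y' : DT n) :
    dmul n t X (Y + Y') = dmul n t X Y + dmul n t X Y' := by
  unfold dmul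
  rw [← Finsupp.sum_add]
  refine Finsupp.sum_congr fun p _ => ?_
  apply Finsupp.sum_add_index' <;> intros <;>
    simp [Matrix.mul_add, smul_add, Finsupp.single_add]

lemma dmul_single_single (p q : ℤ × ℤ) (A B : Matrix (Fin n) (Fin n) ℂ) :
    dmul n t (Finsupp.single p A) (Finsupp.single q B) =
      Finsupp.single (p.1 + q.1, p.2 + q.2) (t ^ (-(p.2 * q.1)) • (A * B)) := by
  unfold dmul
  rw [Finsupp.sum_single_index (by simp), Finsupp.sum_single_index (by simp)]

lemma phi2_single_single (p q : ℤ × ℤ) (A B : Matrix (Fin n) (Fin n) ℂ) :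
    phi2 n t (Finsupp.single p A) (Finsupp.single q B) =
      if q = (-p.1, -p.2) then (p.1 : ℂ) * t ^ (p.1 * p.2) * (A * B).trace else 0 := by
  unfold phi2
  rw [Finsupp.sum_single_index (by simp), Finsupp.single_apply]
  split <;> simp

lemma dbr_add_left (X X' Y : DT n) :
    dbr n t (X + X') Y = dbr n t X Y + dbr n t X' Y := by
  unfold dbr; rw [dmul_add_left, dmul_add_right]; abel

lemma dbr_add_right (X Y Y' : DT n) :
    dbr n t X (Y + Y') = dbr n t X Y + dbr n t X Y' := by
  unfold dbr; rw [dmul_add_left, dmul_add_right]; abel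

lemma dbr_zero_left (Y : DT n) : dbr n t 0 Y = 0 := by
  simp [dbr, dmul_zero_left, dmul_zero_right]

lemma dbr_zero_right (X : DT n) : dbr n t X 0 = 0 := by
  simp [dbr, dmul_zero_left, dmul_zero_right]

lemma antisym_single (p q : ℤ × ℤ) (A B : Matrix (Fin n) (Fin n) ℂ) :
    phi2 n t (Finsupp.single p A) (Finsupp.single q B)
      + phi2 n t (Finsupp.single q B) (Finsupp.single p A) = 0 := by
  obtain ⟨p1, p2⟩ := p
  obtain ⟨q1, q2⟩ := q
  rw [phi2_single_single, phi2_single_single]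
  simp only [Prod.mk.injEq]
  by_cases h : q1 = -p1 ∧ q2 = -p2
  · obtain ⟨h1, h2⟩ := h
    subst h1; subst h2
    rw [if_pos ⟨rfl, rfl⟩, if_pos (by constructor <;> ring)]
    rw [Matrix.trace_mul_comm B A, show (-p1) * -p2 = p1 * p2 by ring]
    push_cast
    ring
  · rw [if_neg (by omega), if_neg (by omega), add_zero]

lemma cocycle_single (ht : t ≠ 0) (p q r : ℤ × ℤ) (A B C : Matrix (Fin n) (Fin n) ℂ) :
    phi2 n t (dbr n t (Finsupp.single p A) (Finsupp.single q B)) (Finsupp.single r C)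
      + phi2 n t (dbr n t (Finsupp.single q B) (Finsupp.single r C)) (Finsupp.single p A)
      + phi2 n t (dbr n t (Finsupp.single r C) (Finsupp.single p A)) (Finsupp.single q B) = 0 := by
  obtain ⟨p1, p2⟩ := p
  obtain ⟨q1, q2⟩ := q
  obtain ⟨r1, r2⟩ := r
  simp only [dbr, phi2_sub_left, dmul_single_single, phi2_single_single, Prod.mk.injEq]
  by_cases h : p1 + q1 + r1 = 0 ∧ p2 + q2 + r2 = 0
  · obtain ⟨h1, h2⟩ := h
    have e1 : r1 = -(p1 + q1) := by omega
    have e2 : r2 = -(p2 + q2) := by omega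
    subst e1; subst e2
    rw [if_pos (by constructor <;> ring), if_pos (by constructor <;> ring),
        if_pos (by constructor <;> ring), if_pos (by constructor <;> ring),
        if_pos (by constructor <;> ring), if_pos (by constructor <;> ring)]
    simp only [Matrix.smul_mul, Matrix.trace_smul, smul_eq_mul]
    rw [Matrix.trace_mul_cycle C A B, Matrix.trace_mul_cycle B C A,
        Matrix.trace_mul_cycle C B A, Matrix.trace_mul_cycle A C B]
    have z : ∀ a b c : ℤ, a + b = c → t ^ a * t ^ b = t ^ c := by
      intro a b c h; rw [← h, zpow_add₀ ht]
    have z1 := z ((p1 + q1) * (p2 + q2)) (-(p2 * q1)) (p1*p2 + q1*q2 + p1*q2) (by ring)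
    have z2 := z ((q1 + p1) * (q2 + p2)) (-(q2 * p1)) (p1*p2 + q1*q2 + q1*p2) (by ring)
    have z3 := z ((q1 + -(p1 + q1)) * (q2 + -(p2 + q2))) (-(q2 * -(p1 + q1))) (p1*p2 + q1*q2 + p1*q2) (by ring)
    have z4 := z ((-(p1 + q1) + q1) * (-(p2 + q2) + q2)) (-(-(p2 + q2) * q1)) (p1*p2 + q1*q2 + q1*p2) (by ring)
    have z5 := z ((-(p1 + q1) + p1) * (-(p2 + q2) + p2)) (-(-(p2 + q2) * p1)) (p1*p2 + q1*q2 + p1*q2) (by ring)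
    have z6 := z ((p1 + -(p1 + q1)) * (p2 + -(p2 + q2))) (-(p2 * -(p1 + q1))) (p1*p2 + q1*q2 + q1*p2) (by ring)
    push_cast
    linear_combination ((p1:ℂ) + q1) * (A*B*C).trace * z1 - ((q1:ℂ) + p1) * (B*A*C).trace * z2 +
      ((q1:ℂ) + -(p1 + q1)) * (A*B*C).trace * z3 - ((-(p1 + q1) : ℂ) + q1) * (B*A*C).trace * z4 +
      ((-(p1 + q1) : ℂ) + p1) * (A*B*C).trace * z5 - ((p1:ℂ) + -(p1 + q1)) * (B*A*C).trace * z6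
  · rw [if_neg (by omega), if_neg (by omega), if_neg (by omega),
        if_neg (by omega), if_neg (by omega), if_neg (by omega)]
    ring

noncomputable def Jco (n : ℕ) (t : ℂ) (X Y W : DT n) : ℂ :=
  phi2 n t (dbr n t X Y) W + phi2 n t (dbr n t Y W) X + phi2 n t (dbr n t W X) Y

lemma Jco_add_left (X X' Y W : DT n) :
    Jco n t (X + X') Y W = Jco n t X Y W + Jco n t X' Y W := by
  unfold Jco
  rw [dbr_add_left, dbr_add_right, phi2_add_left, phi2_add_right, phi2_add_left]
  ring

lemma Jco_add_mid (X Y Y' W : DT n) :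
    Jco n t X (Y + Y') W = Jco n t X Y W + Jco n t X Y' W := by
  unfold Jco
  rw [dbr_add_right, dbr_add_left, phi2_add_left, phi2_add_left, phi2_add_right]
  ring

lemma Jco_add_right (X Y W W' : DT n) :
    Jco n t X Y (W + W') = Jco n t X Y W + Jco n t X Y W' := by
  unfold Jco
  rw [dbr_add_right, dbr_add_left, phi2_add_right, phi2_add_left, phi2_add_left]
  ring

lemma Jco_zero_left (Y W : DT n) : Jco n t 0 Y W = 0 := by
  simp [Jco, dbr_zero_left, dbr_zero_right, phi2_zero_left, phi2_zero_right]

lemma Jco_zero_mid (X W : DT n) : Jco n t X 0 W = 0 := by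
  simp [Jco, dbr_zero_left, dbr_zero_right, phi2_zero_left, phi2_zero_right]

lemma Jco_zero_right (X Y : DT n) : Jco n t X Y 0 = 0 := by
  simp [Jco, dbr_zero_left, dbr_zero_right, phi2_zero_left, phi2_zero_right]

lemma Jco_eq_zero (ht : t ≠ 0) (X Y W : DT n) : Jco n t X Y W = 0 := by
  induction X using Finsupp.induction generalizing Y W with
  | zero => exact Jco_zero_left Y W
  | single_add p A X _ _ ihX =>
    rw [Jco_add_left, ihX, add_zero]
    induction Y using Finsupp.induction generalizing W with
    | zero => exact Jco_zero_mid _ W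
    | single_add q B Y _ _ ihY =>
      rw [Jco_add_mid, ihY, add_zero]
      induction W using Finsupp.induction with
      | zero => exact Jco_zero_right _ _
      | single_add r C W _ _ ihW =>
        rw [Jco_add_right, ihW, add_zero]
        exact cocycle_single ht p q r A B C

lemma antisym_single_left (p : ℤ × ℤ) (A : Matrix (Fin n) (Fin n) ℂ) (Y : DT n) :
    phi2 n t (Finsupp.single p A) Y + phi2 n t Y (Finsupp.single p A) = 0 := by
  induction Y using Finsupp.induction with
  | zero => rw [phi2_zero_left, phi2_zero_right, add_zero]
  | single_add q B Y _ _ ihY =>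
    rw [phi2_add_left, phi2_add_right]
    linear_combination antisym_single (t := t) p q A B + ihY

lemma antisym (X Y : DT n) : phi2 n t X Y + phi2 n t Y X = 0 := by
  induction X using Finsupp.induction generalizing Y with
  | zero => rw [phi2_zero_left, phi2_zero_right, add_zero]
  | single_add p A X _ _ ihX =>
    rw [phi2_add_left, phi2_add_right]
    linear_combination antisym_single_left (t := t) p A Y + ihX Y

/-- `φ^{(2)}` is a Lie algebra 2-cocycle on `𝔡_t^{(n)}`: it is antisymmetric and
satisfies `φ([X,Y],W) + φ([Y,W],X) + φ([W,X],Y) = 0`. -/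
theorem stmt3 (n : ℕ) (t : ℂ) (ht : t ≠ 0) :
    (∀ X Y : DT n, phi2 n t X Y = - phi2 n t Y X) ∧
    (∀ X Y W : DT n,
      phi2 n t (dbr n t X Y) W + phi2 n t (dbr n t Y W) X + phi2 n t (dbr n t W X) Y = 0) := by
  exact ⟨fun X Y => by linear_combination antisym X Y, fun X Y W => Jco_eq_zero ht X Y W⟩
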